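/- Vertex attainment lemma: if a sequence of polytopes C^{(t)} = conv{x_1^{(t)},...,x_N^{(t)}} is nested decreasing with intersection C, then for every extreme point v of C there exist an index j and a subsequence t_n such that x_j^{(t_n)} → v. -/

import Mathlib

open Filter

lemma exists_weights' {N p : ℕ} (f : Fin N → EuclideanSpace ℝ (Fin p)) {v : EuclideanSpace ℝ (Fin p)}
    (hv : v ∈ convexHull ℝ (Set.range f)) :
    ∃ w : Fin N → ℝ, (∀ i, 0 ≤ w i) ∧ ∑ i, w i = 1 ∧ ∑ i, w i • f i = v := by
  rw [convexHull_range_eq_exists_affineCombination] at hv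
  obtain ⟨s, w, h0, h1, h2⟩ := hv
  refine ⟨fun i => if i ∈ s then w i else 0,
    fun i => by simp only []; split <;> simp_all [h0], ?_, ?_⟩
  · rw [Finset.sum_ite_mem, Finset.univ_inter, h1]
  · have := Finset.affineCombination_eq_linear_combination s f w h1
    rw [this] at h2
    rw [← h2]
    simp only [ite_smul, zero_smul]
    rw [Finset.sum_ite_mem, Finset.univ_inter]

theorem stmt_15 (p N : ℕ) (x : ℕ → Fin N → EuclideanSpace ℝ (Fin p))
    (hnest : ∀ t, convexHull ℝ (Set.range (x (t + 1))) ⊆ convexHull ℝ (Set.range (x t)))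
    (v : EuclideanSpace ℝ (Fin p))
    (hv : v ∈ Set.extremePoints ℝ (⋂ t, convexHull ℝ (Set.range (x t)))) :
    ∃ (j : Fin N) (φ : ℕ → ℕ), StrictMono φ ∧
      Tendsto (fun n => x (φ n) j) atTop (nhds v) := by
  set C : ℕ → Set (EuclideanSpace ℝ (Fin p)) :=
    fun t => convexHull ℝ (Set.range (x t)) with hC
  have hanti : Antitone C := antitone_nat_of_succ_le hnest
  have hcomp : ∀ t, IsCompact (C t) := fun t =>
    (Set.finite_range (x t)).isCompact_convexHull ℝ
  have hclosed : ∀ t, IsClosed (C t) := fun t => (hcomp t).isClosed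
  have hvC : ∀ t, v ∈ C t := fun t => Set.mem_iInter.mp hv.1 t
  -- N positive
  rcases Nat.eq_zero_or_pos N with hN | hN
  · exfalso
    have := hvC 0
    subst hN
    simp [hC, Set.range_eq_empty] at this
  have hNpos : (0:ℝ) < N := by exact_mod_cast hN
  -- weights
  have hw : ∀ t, ∃ w : Fin N → ℝ, (∀ i, 0 ≤ w i) ∧ ∑ i, w i = 1 ∧ ∑ i, w i • x t i = v :=
    fun t => exists_weights' (x t) (hvC t)
  choose w hw0 hw1 hw2 using hw
  have hwle1 : ∀ t i, w t i ≤ 1 := by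
    intro t i
    rw [← hw1 t]
    exact Finset.single_le_sum (fun i _ => hw0 t i) (Finset.mem_univ i)
  -- pigeonhole: some j with w t j ≥ 1/N infinitely often
  have hbig : ∀ t, ∃ j, 1 / (N:ℝ) ≤ w t j := by
    intro t
    have h : ∑ _i : Fin N, 1 / (N:ℝ) ≤ ∑ i, w t i := by
      rw [hw1 t]
      simp only [Finset.sum_const, Finset.card_univ, Fintype.card_fin, nsmul_eq_mul]
      rw [mul_one_div, div_self hNpos.ne']
    obtain ⟨i, _, hi⟩ := Finset.exists_le_of_sum_le ⟨⟨0, hN⟩, Finset.mem_univ _⟩ h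
    exact ⟨i, hi⟩
  obtain ⟨j, hjinf⟩ : ∃ j : Fin N, {t | 1 / (N:ℝ) ≤ w t j}.Infinite := by
    by_contra hfin
    push_neg at hfin
    have : (Set.univ : Set ℕ).Finite := by
      have : (Set.univ : Set ℕ) ⊆ ⋃ j : Fin N, {t | 1 / (N:ℝ) ≤ w t j} := by
        intro t _
        obtain ⟨j, hj⟩ := hbig t
        exact Set.mem_iUnion.mpr ⟨j, hj⟩
      exact (Set.finite_iUnion hfin).subset this
    exact Set.infinite_univ this
  -- first subsequence
  set ψ : ℕ → ℕ := Nat.nth (fun t => 1 / (N:ℝ) ≤ w t j) with hψ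
  have hψmono : StrictMono ψ := Nat.nth_strictMono hjinf
  have hψmem : ∀ n, 1 / (N:ℝ) ≤ w (ψ n) j := fun n => Nat.nth_mem_of_infinite hjinf n
  -- compactness subsequence on (weight, point)
  have hxC : ∀ t, x t j ∈ C t := fun t => subset_convexHull ℝ _ (Set.mem_range_self j)
  have hxC0 : ∀ t, x t j ∈ C 0 := fun t => hanti (Nat.zero_le t) (hxC t)
  have hKcomp : IsCompact ((Set.Icc (0:ℝ) 1) ×ˢ C 0) := isCompact_Icc.prod (hcomp 0)
  obtain ⟨⟨lam, xs⟩, hmem, φ2, hφ2, hconv⟩ :=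
    hKcomp.tendsto_subseq (x := fun n => (w (ψ n) j, x (ψ n) j))
      (fun n => ⟨⟨hw0 _ j, hwle1 _ j⟩, hxC0 _⟩)
  set φ : ℕ → ℕ := ψ ∘ φ2 with hφdef
  have hφmono : StrictMono φ := hψmono.comp hφ2
  have hwlim : Tendsto (fun n => w (φ n) j) atTop (nhds lam) :=
    (continuous_fst.tendsto _).comp hconv
  have hxlim : Tendsto (fun n => x (φ n) j) atTop (nhds xs) :=
    (continuous_snd.tendsto _).comp hconv
  have hlamlb : 1 / (N:ℝ) ≤ lam :=
    ge_of_tendsto hwlim (Eventually.of_forall fun n => hψmem (φ2 n))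
  have hlamub : lam ≤ 1 := le_of_tendsto hwlim (Eventually.of_forall fun n => hwle1 _ j)
  have hlampos : 0 < lam := lt_of_lt_of_le (by positivity) hlamlb
  -- xs ∈ C s for all s
  have hmemC : ∀ s, xs ∈ C s := by
    intro s
    refine (hclosed s).mem_of_tendsto hxlim (eventually_atTop.mpr ⟨s, fun n hn => ?_⟩)
    exact hanti (hn.trans (hφmono.le_apply)) (hxC (φ n))
  refine ⟨j, φ, hφmono, ?_⟩
  -- suffices xs = v
  suffices hxv : xs = v by rwa [hxv] at hxlim
  -- bounds and identities
  have hxC0all : ∀ t i, x t i ∈ C 0 := fun t i =>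
    hanti (Nat.zero_le t) (subset_convexHull ℝ _ (Set.mem_range_self i))
  obtain ⟨M, hM⟩ : ∃ M, ∀ y ∈ C 0, ‖y‖ ≤ M :=
    (hcomp 0).isBounded.exists_norm_le
  have key : ∀ t, ∑ i ∈ Finset.univ.erase j, w t i • x t i = v - w t j • x t j := by
    intro t
    have h := Finset.add_sum_erase Finset.univ (fun i => w t i • x t i) (Finset.mem_univ j)
    rw [hw2 t] at h
    exact eq_sub_of_add_eq' h
  have keyw : ∀ t, ∑ i ∈ Finset.univ.erase j, w t i = 1 - w t j := by
    intro t
    have h := Finset.add_sum_erase Finset.univ (w t) (Finset.mem_univ j)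
    rw [hw1 t] at h
    exact eq_sub_of_add_eq' h
  have hnormbd : ∀ t, ‖v - w t j • x t j‖ ≤ (1 - w t j) * M := by
    intro t
    rw [← key t]
    calc ‖∑ i ∈ Finset.univ.erase j, w t i • x t i‖
        ≤ ∑ i ∈ Finset.univ.erase j, ‖w t i • x t i‖ := norm_sum_le _ _
      _ = ∑ i ∈ Finset.univ.erase j, w t i * ‖x t i‖ := by
          refine Finset.sum_congr rfl fun i _ => ?_
          rw [norm_smul, Real.norm_eq_abs, abs_of_nonneg (hw0 t i)]
      _ ≤ ∑ i ∈ Finset.univ.erase j, w t i * M :=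
          Finset.sum_le_sum fun i _ =>
            mul_le_mul_of_nonneg_left (hM _ (hxC0all t i)) (hw0 t i)
      _ = (1 - w t j) * M := by rw [← Finset.sum_mul, keyw t]
  have hsublim : Tendsto (fun n => v - w (φ n) j • x (φ n) j) atTop
      (nhds (v - lam • xs)) := tendsto_const_nhds.sub (hwlim.smul hxlim)
  rcases eq_or_lt_of_le hlamub with hlam1 | hlamlt
  · -- lam = 1 : v - w • x → 0 so v = xs
    have hzero : Tendsto (fun n => v - w (φ n) j • x (φ n) j) atTop (nhds 0) := by
      refine squeeze_zero_norm (fun n => hnormbd (φ n)) ?_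
      have : Tendsto (fun n => (1 - w (φ n) j) * M) atTop (nhds ((1 - lam) * M)) :=
        (tendsto_const_nhds.sub hwlim).mul tendsto_const_nhds
      have h0 : (1 - lam) * M = 0 := by rw [← hlam1]; ring
      rwa [h0] at this
    have := tendsto_nhds_unique hsublim hzero
    rw [sub_eq_zero, hlam1, one_smul] at this
    exact this.symm
  · -- lam < 1 : build second point ys ∈ C and use extremality
    set ys : EuclideanSpace ℝ (Fin p) := (1 - lam)⁻¹ • (v - lam • xs) with hys
    have h1lam : (1:ℝ) - lam ≠ 0 := by linarith
    have hylim : Tendsto (fun n => (1 - w (φ n) j)⁻¹ • (v - w (φ n) j • x (φ n) j))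
        atTop (nhds ys) :=
      ((tendsto_const_nhds.sub hwlim).inv₀ h1lam).smul hsublim
    have hyCn : ∀ n, w (φ n) j < 1 →
        (1 - w (φ n) j)⁻¹ • (v - w (φ n) j • x (φ n) j) ∈ C (φ n) := by
      intro n hn
      have hpos : 0 < ∑ i ∈ Finset.univ.erase j, w (φ n) i := by
        rw [keyw]; linarith
      have hmem := Finset.centerMass_mem_convexHull (Finset.univ.erase j)
        (fun i _ => hw0 (φ n) i) hpos
        (fun i _ => Set.mem_range_self (f := x (φ n)) i)
      rwa [Finset.centerMass, keyw, key] at hmem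
    have hysC : ∀ s, ys ∈ C s := by
      intro s
      refine (hclosed s).mem_of_tendsto hylim ?_
      filter_upwards [eventually_ge_atTop s, hwlim.eventually_lt_const hlamlt]
        with n hn hn2
      exact hanti (hn.trans hφmono.le_apply) (hyCn n hn2)
    have hseg : v ∈ openSegment ℝ xs ys := by
      refine ⟨lam, 1 - lam, hlampos, by linarith, by ring, ?_⟩
      rw [hys, smul_inv_smul₀ h1lam]
      abel
    exact (hv.2 (Set.mem_iInter.mpr hmemC) (Set.mem_iInter.mpr hysC) hseg)
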